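/- The truncated identity holds: the first N² + 1 coefficients (in q) of ∏_{i=1}^∞ 1/(1 − q^i) agree with those of ∑_{k=0}^{N} q^{k²} / ∏_{j=1}^k (1 − q^j)². -/

import Mathlib

open Finset PowerSeries
noncomputable section
abbrev R' : Type := PowerSeries ℚ
abbrev K' : Type := FractionRing R'
noncomputable def cK : R' →+* K' := algebraMap R' K'
noncomputable def xx : K' := cK X
noncomputable def pp (n : ℕ) : K' := ∏ j ∈ range n, (1 - xx ^ (j + 1))

lemma one_sub_ne (j : ℕ) : (1 - xx ^ (j+1)) ≠ 0 := by
  intro h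
  have h2 : cK (1 - (X:R')^(j+1)) = 0 := by simpa [xx, map_sub, map_pow] using h
  have h3 : (1 - (X:R')^(j+1)) = 0 := (map_eq_zero_iff cK (IsFractionRing.injective R' K')).mp h2
  have h4 : constantCoeff (1 - (X:R')^(j+1)) = 1 := by simp
  rw [h3] at h4; simp at h4

lemma pp_ne (n : ℕ) : pp n ≠ 0 := Finset.prod_ne_zero_iff.mpr (fun j _ => one_sub_ne j)

lemma pp_succ (n : ℕ) : pp (n+1) = pp n * (1 - xx ^ (n+1)) := Finset.prod_range_succ _ _


lemma pp_zero : pp 0 = 1 := Finset.prod_range_zero _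

noncomputable def bino (d i : ℕ) : K' := if i ≤ d then pp d * (pp i)⁻¹ * (pp (d - i))⁻¹ else 0

lemma bino_zero (d : ℕ) : bino d 0 = 1 := by
  rw [bino, if_pos (Nat.zero_le d), pp_zero, Nat.sub_zero, inv_one, mul_one,
    mul_inv_cancel₀ (pp_ne d)]

lemma bino_self (d : ℕ) : bino d d = 1 := by
  rw [bino, if_pos le_rfl, Nat.sub_self, pp_zero, inv_one, mul_one,
    mul_inv_cancel₀ (pp_ne d)]

lemma pascal (d i : ℕ) (hi : 1 ≤ i) :
    bino (d+1) i = bino d i + xx ^ (d+1-i) * bino d (i-1) := by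
  rcases lt_trichotomy i (d+1) with h | h | h
  · -- 1 ≤ i ≤ d
    have hid : i ≤ d := by omega
    obtain ⟨j, rfl⟩ : ∃ j, i = j + 1 := ⟨i - 1, by omega⟩
    have e3 : d + 1 - (j+1) = d - j := by omega
    have e5 : j + 1 - 1 = j := rfl
    simp only [bino, if_pos (by omega : j+1 ≤ d+1), if_pos hid, if_pos (by omega : j ≤ d), e3, e5]
    have e1 : pp (d+1) = pp d * (1 - xx^(d+1)) := pp_succ d
    have e2 : pp (j+1) = pp j * (1 - xx^(j+1)) := pp_succ j
    have e4 : pp (d - j) = pp (d - (j+1)) * (1 - xx^(d-j)) := by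
      have h6 : d - j = (d - (j+1)) + 1 := by omega
      rw [h6, pp_succ, ← h6]
    have hBA : xx^(d+1) = xx^(d-j) * xx^(j+1) := by
      rw [← pow_add]; congr 1; omega
    rw [e1, e2, e4, hBA]
    have hv : (1 - xx^(d-j)) ≠ 0 := by
      have h7 := one_sub_ne (d-(j+1))
      rwa [show d-(j+1)+1 = d-j by omega] at h7
    have hu := one_sub_ne j
    have haux : ∀ (a b c A B : K'), b ≠ 0 → c ≠ 0 → (1 - A) ≠ 0 → (1 - B) ≠ 0 →
        a * (1 - B*A) * (b*(1-A))⁻¹ * (c*(1-B))⁻¹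
          = a * (b*(1-A))⁻¹ * c⁻¹ + B * (a * b⁻¹ * (c*(1-B))⁻¹) := by
      intro a b c A B hb hc hA hB
      field_simp
      ring
    have h9 := haux (pp d) (pp j) (pp (d-(j+1))) (xx^(j+1)) (xx^(d-j))
      (pp_ne j) (pp_ne (d-(j+1))) hu hv
    linear_combination h9
  · -- i = d+1
    subst h
    rw [bino_self, Nat.sub_self, Nat.add_sub_cancel, bino_self, pow_zero,
      bino, if_neg (by omega : ¬ d+1 ≤ d)]
    ring
  · rw [bino, if_neg (by omega : ¬ i ≤ d+1), bino, if_neg (by omega : ¬ i ≤ d),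
      bino, if_neg (by omega : ¬ i - 1 ≤ d)]
    ring

lemma S_lemma : ∀ d r, (∑ i ∈ range (d+1), xx^(i*(i+r)) * bino d i * (pp (i+r))⁻¹)
    = (pp (d+r))⁻¹ := by
  intro d
  induction d with
  | zero => intro r; simp [bino_zero]
  | succ d IH =>
    intro r
    have hg : ∀ j ∈ range (d+1),
        xx^((j+1)*((j+1)+r)) * bino (d+1) (j+1) * (pp ((j+1)+r))⁻¹
          = xx^((j+1)*((j+1)+r)) * bino d (j+1) * (pp ((j+1)+r))⁻¹
            + xx^(d+r+1) * (xx^(j*(j+(r+1))) * bino d j * (pp (j+(r+1)))⁻¹) := by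
      intro j hj
      have hjd : j ≤ d := by simpa using Nat.lt_succ_iff.mp (Finset.mem_range.mp hj)
      rw [pascal d (j+1) (by omega)]
      have hpi : (j+(r+1)) = (j+1)+r := by omega
      have he : xx^((j+1)*((j+1)+r)) * xx^(d+1-(j+1)) = xx^(d+r+1) * xx^(j*(j+(r+1))) := by
        obtain ⟨k, rfl⟩ : ∃ k, d = j + k := ⟨d - j, by omega⟩
        rw [show j+k+1-(j+1) = k by omega, ← pow_add, ← pow_add]
        congr 1
        ring
      rw [hpi]
      calc xx^((j+1)*((j+1)+r)) * (bino d (j+1) + xx^(d+1-(j+1)) * bino d j)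
            * (pp ((j+1)+r))⁻¹
          = xx^((j+1)*((j+1)+r)) * bino d (j+1) * (pp ((j+1)+r))⁻¹
            + (xx^((j+1)*((j+1)+r)) * xx^(d+1-(j+1))) * bino d j * (pp ((j+1)+r))⁻¹ := by ring
        _ = _ := by rw [he]; ring
    rw [Finset.sum_range_succ', Finset.sum_congr rfl hg, Finset.sum_add_distrib]
    have hT1 : (∑ j ∈ range (d+1), xx^((j+1)*((j+1)+r)) * bino d (j+1) * (pp ((j+1)+r))⁻¹)
        + xx^(0*(0+r)) * bino (d+1) 0 * (pp (0+r))⁻¹ = (pp (d+r))⁻¹ := by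
      have h0 : xx^(0*(0+r)) * bino (d+1) 0 * (pp (0+r))⁻¹
          = xx^(0*(0+r)) * bino d 0 * (pp (0+r))⁻¹ := by rw [bino_zero, bino_zero]
      rw [h0]
      have hs := Finset.sum_range_succ' (fun i => xx^(i*(i+r)) * bino d i * (pp (i+r))⁻¹) (d+1)
      rw [← hs, Finset.sum_range_succ]
      have hz : bino d (d+1) = 0 := if_neg (by omega)
      rw [hz]
      simpa using IH r
    have hT2 : (∑ j ∈ range (d+1), xx^(d+r+1) * (xx^(j*(j+(r+1))) * bino d j * (pp (j+(r+1)))⁻¹))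
        = xx^(d+r+1) * (pp (d+(r+1)))⁻¹ := by
      rw [← Finset.mul_sum, IH (r+1)]
    rw [add_right_comm, hT1, hT2]
    have hps : pp (d+(r+1)) = pp (d+r) * (1 - xx^(d+r+1)) := by
      rw [show d+(r+1) = (d+r)+1 by omega, pp_succ]
    rw [show d+1+r = d+(r+1) by omega, hps]
    have h1 := pp_ne (d+r)
    have h2 := one_sub_ne (d+r)
    field_simp
    ring

noncomputable def PP (n : ℕ) : R' := ∏ j ∈ range n, (1 - (X : R') ^ (j + 1))

lemma PP_const (n : ℕ) : constantCoeff (PP n) = 1 := by simp [PP]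

lemma PP_const_ne (n : ℕ) : constantCoeff (PP n) ≠ 0 := by rw [PP_const]; norm_num

lemma cK_PP (n : ℕ) : cK (PP n) = pp n := by
  simp [PP, pp, map_prod, map_sub, map_pow, xx]

lemma cK_inv (φ : R') (h : constantCoeff φ ≠ 0) : cK φ⁻¹ = (cK φ)⁻¹ := by
  have h1 : φ⁻¹ * φ = 1 := PowerSeries.inv_mul_cancel φ h
  have h2 : cK φ⁻¹ * cK φ = 1 := by rw [← map_mul, h1, map_one]
  exact eq_inv_of_mul_eq_one_left h2

/-- PowerSeries-level Durfee identity, truncated at level `n`. -/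
lemma PP_inv_eq (n : ℕ) :
    (PP n)⁻¹ = ∑ k ∈ range (n+1),
      (X : R')^(k*k) * (PP n * ((PP k)⁻¹)^2 * (PP (n-k))⁻¹) := by
  apply IsFractionRing.injective R' K'
  show cK _ = cK _
  rw [cK_inv _ (PP_const_ne n), map_sum, cK_PP]
  have hS := S_lemma n 0
  simp only [Nat.add_zero, Nat.mul_comm] at hS
  rw [← hS]
  apply Finset.sum_congr rfl
  intro k hk
  have hkn : k ≤ n := Nat.lt_succ_iff.mp (Finset.mem_range.mp hk)
  rw [map_mul, map_mul, map_mul, map_pow, map_pow, cK_PP, cK_inv _ (PP_const_ne k),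
    cK_inv _ (PP_const_ne (n-k)), cK_PP, cK_PP, bino, if_pos hkn]
  show xx ^ (k*k) * (pp n * (pp k)⁻¹ * (pp (n-k))⁻¹) * (pp k)⁻¹
      = (cK X) ^ (k*k) * (pp n * ((pp k)⁻¹)^2 * (pp (n-k))⁻¹)
  rw [show (cK X) = xx from rfl]
  ring

lemma tail_dvd (t : ℕ) (s : Finset ℕ) (f : ℕ → ℕ) (h : ∀ j ∈ s, t ≤ f j) :
    (X : R')^t ∣ (∏ j ∈ s, (1 - (X : R')^(f j))) - 1 := by
  classical
  induction s using Finset.induction_on with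
  | empty => simp
  | insert a s' ha IH =>
    rw [Finset.prod_insert ha]
    have h1 : (X : R')^t ∣ (∏ j ∈ s', (1 - (X : R')^(f j))) - 1 :=
      IH (fun j hj => h j (Finset.mem_insert_of_mem hj))
    have h2 : (X : R')^t ∣ (X : R')^(f a) * ∏ j ∈ s', (1 - (X : R')^(f j)) :=
      Dvd.dvd.mul_right (pow_dvd_pow X (h a (Finset.mem_insert_self a s'))) _
    have he : (1 - (X : R')^(f a)) * (∏ j ∈ s', (1 - (X : R')^(f j))) - 1
        = ((∏ j ∈ s', (1 - (X : R')^(f j))) - 1)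
          - (X : R')^(f a) * ∏ j ∈ s', (1 - (X : R')^(f j)) := by ring
    rw [he]
    exact dvd_sub h1 h2

lemma coeff_eq_of_dvd {φ ψ : R'} {m t : ℕ} (h : (X : R')^t ∣ φ - ψ) (hmt : m < t) :
    coeff m φ = coeff m ψ := by
  have h2 := (PowerSeries.X_pow_dvd_iff.mp h) m hmt
  rw [map_sub, sub_eq_zero] at h2
  exact h2

lemma one_sub_const (i : ℕ) : constantCoeff (1 - (X : R')^(i+1)) ≠ 0 := by simp

lemma PP_add (a b : ℕ) : PP (a+b) = PP a * ∏ j ∈ range b, (1 - (X : R')^(a+j+1)) := by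
  rw [PP, PP, Finset.prod_range_add]

lemma prod_inv_eq (m : ℕ) :
    (∏ i ∈ range (m+1), (1 - (X : R')^(i+1))⁻¹) = (PP (m+1))⁻¹ := by
  rw [PowerSeries.eq_inv_iff_mul_eq_one (PP_const_ne _), PP, ← Finset.prod_mul_distrib]
  rw [Finset.prod_congr rfl
    (fun i _ => PowerSeries.inv_mul_cancel _ (one_sub_const i))]
  simp

/-- Truncated Euler–Gauss identity: for every `m ≤ N²`, the `m`-th coefficient of
`∏_{i≥1} 1/(1-q^i)` (the `m`-th coefficient of the infinite product equals that of the
product of the first `m+1` factors, since the remaining factors are `1 + O(q^{m+1})`)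
agrees with the `m`-th coefficient of the finite sum `∑_{k=0}^N q^{k²}/∏_{j=1}^k (1-q^j)²`. -/
theorem truncated_euler_gauss (N m : ℕ) (hm : m ≤ N ^ 2) :
    PowerSeries.coeff m
        (∏ i ∈ Finset.range (m + 1), ((1 - (PowerSeries.X : PowerSeries ℚ) ^ (i + 1))⁻¹)) =
      PowerSeries.coeff m
        (∑ k ∈ Finset.range (N + 1),
          (PowerSeries.X : PowerSeries ℚ) ^ (k ^ 2) *
            ((∏ j ∈ Finset.range k, (1 - (PowerSeries.X : PowerSeries ℚ) ^ (j + 1)))⁻¹) ^ 2) := by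
  set n := m + N + 1 with hn
  rw [prod_inv_eq m]
  simp only [show ∀ k, (∏ j ∈ Finset.range k, (1 - (X : R')^(j+1))) = PP k from fun k => rfl]
  -- Step 1: replace (PP (m+1))⁻¹ by (PP n)⁻¹
  have step1 : coeff m (PP (m+1))⁻¹ = coeff m (PP n)⁻¹ := by
    have hsplit : PP n = PP (m+1) * ∏ j ∈ range N, (1 - (X : R')^((m+1)+j+1)) := by
      have h := PP_add (m+1) N
      rw [show (m+1) + N = n by omega] at h
      exact h
    set Q : R' := ∏ j ∈ range N, (1 - (X : R')^((m+1)+j+1)) with hQ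
    have hQc : constantCoeff Q ≠ 0 := by
      rw [hQ]
      simp
    have hQd : (X : R')^(m+1) ∣ Q - 1 := by
      apply tail_dvd
      intro j _
      omega
    have hinv : (PP n)⁻¹ = Q⁻¹ * (PP (m+1))⁻¹ := by
      rw [hsplit, PowerSeries.mul_inv_rev]
    have hdiff : (PP (m+1))⁻¹ - (PP n)⁻¹ = (PP (m+1))⁻¹ * Q⁻¹ * (Q - 1) := by
      rw [hinv]
      have : Q⁻¹ * Q = 1 := PowerSeries.inv_mul_cancel _ hQc
      calc (PP (m+1))⁻¹ - Q⁻¹ * (PP (m+1))⁻¹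
          = (PP (m+1))⁻¹ * (Q⁻¹ * Q) - (PP (m+1))⁻¹ * Q⁻¹ * 1 := by rw [this]; ring
        _ = (PP (m+1))⁻¹ * Q⁻¹ * (Q - 1) := by ring
    refine coeff_eq_of_dvd ?_ (Nat.lt_succ_self m)
    rw [hdiff]
    exact Dvd.dvd.mul_left hQd _
  rw [step1, PP_inv_eq n]
  -- Step 3: compare the two sums
  refine coeff_eq_of_dvd ?_ (Nat.lt_succ_self m)
  have hsum : (∑ k ∈ range (n+1), (X : R')^(k*k) * (PP n * ((PP k)⁻¹)^2 * (PP (n-k))⁻¹))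
      = (∑ k ∈ range (N+1), (X : R')^(k*k) * (PP n * ((PP k)⁻¹)^2 * (PP (n-k))⁻¹))
        + ∑ j ∈ range (m+1),
            (X : R')^((N+1+j)*(N+1+j)) * (PP n * ((PP (N+1+j))⁻¹)^2 * (PP (n-(N+1+j)))⁻¹) := by
    rw [show n+1 = (N+1)+(m+1) by omega, Finset.sum_range_add]
  rw [hsum, add_sub_right_comm, ← Finset.sum_sub_distrib]
  apply dvd_add
  · -- head terms
    apply Finset.dvd_sum
    intro k hk
    have hkN : k ≤ N := Nat.lt_succ_iff.mp (Finset.mem_range.mp hk)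
    have hksplit : PP n = PP (n-k) * ∏ j ∈ range k, (1 - (X : R')^((n-k)+j+1)) := by
      have h := PP_add (n-k) k
      rw [show (n-k) + k = n by omega] at h
      exact h
    set Qk : R' := ∏ j ∈ range k, (1 - (X : R')^((n-k)+j+1)) with hQk
    have hQkd : (X : R')^(n-k+1) ∣ Qk - 1 := by
      apply tail_dvd
      intro j _
      omega
    have hcancel : PP n * ((PP k)⁻¹)^2 * (PP (n-k))⁻¹ = ((PP k)⁻¹)^2 * Qk := by
      rw [hksplit]
      have h1 : PP (n-k) * (PP (n-k))⁻¹ = 1 := PowerSeries.mul_inv_cancel _ (PP_const_ne _)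
      calc PP (n-k) * Qk * ((PP k)⁻¹)^2 * (PP (n-k))⁻¹
          = (PP (n-k) * (PP (n-k))⁻¹) * Qk * ((PP k)⁻¹)^2 := by ring
        _ = ((PP k)⁻¹)^2 * Qk := by rw [h1]; ring
    have hdiff : (X : R')^(k*k) * (PP n * ((PP k)⁻¹)^2 * (PP (n-k))⁻¹)
        - (X : R')^(k^2) * ((PP k)⁻¹)^2
        = ((X : R')^(k*k) * ((PP k)⁻¹)^2) * (Qk - 1) := by
      rw [hcancel, pow_two, ← Nat.pow_two k]
      ring
    rw [hdiff]
    have h2 : (X : R')^(m+1) ∣ (X : R')^(n-k+1) := by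
      apply pow_dvd_pow
      omega
    exact Dvd.dvd.mul_left (h2.trans hQkd) _
  · -- tail terms
    apply Finset.dvd_sum
    intro j _
    have hle : m+1 ≤ (N+1+j)*(N+1+j) := by
      have h1 : (N+1)*(N+1) ≤ (N+1+j)*(N+1+j) :=
        Nat.mul_le_mul (by omega) (by omega)
      have h2 : N*N + 1 ≤ (N+1)*(N+1) := by nlinarith
      have h3 : m ≤ N*N := by rw [← Nat.pow_two]; exact hm
      omega
    exact Dvd.dvd.mul_right (pow_dvd_pow X hle) _

end
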